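/- Let F be a finitely generated group whose abelianization F/[F,F] is infinite, and let G be a finite group. Then the number of homomorphisms F → G is divisible by |G|. -/

import Mathlib

open DirectSum

open Multiplicative in
lemma GRV_exists_hom (F : Type*) [Group F] [Group.FG F] [Infinite (Abelianization F)] :
    ∃ (v : F →* Multiplicative ℤ) (z : F), v z = ofAdd 1 := by
  classical
  set A := Abelianization F with hA
  have hsurj : Function.Surjective (Abelianization.of : F →* A) := fun a =>
    QuotientGroup.induction_on a fun x => ⟨x, rfl⟩
  haveI : Group.FG A := Group.fg_of_surjective hsurj
  haveI : AddGroup.FG (Additive A) := AddGroup.fg_iff_mul_fg.mpr ‹_›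
  obtain ⟨n, ι, fι, p, hp, e, ⟨f⟩⟩ :=
    AddCommGroup.equiv_free_prod_directSum_zmod (Additive A)
  rcases Nat.eq_zero_or_pos n with hn | hn
  · subst hn
    haveI : ∀ i, NeZero (p i ^ e i) := fun i =>
      ⟨pow_ne_zero _ (hp i).pos.ne'⟩
    haveI : Finite ((Fin 0 →₀ ℤ) × (⨁ i : ι, ZMod (p i ^ e i))) := by
      haveI : Finite (⨁ i : ι, ZMod (p i ^ e i)) := by
        unfold DirectSum; infer_instance
      infer_instance
    haveI : Finite (Additive A) := Finite.of_equiv _ f.symm.toEquiv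
    exact (not_finite (Additive A)).elim
  · set i0 : Fin n := ⟨0, hn⟩
    set g : Additive A →+ ℤ :=
      (Finsupp.applyAddHom i0).comp ((AddMonoidHom.fst _ _).comp f.toAddMonoidHom)
      with hg
    set a : Additive A := f.symm (Finsupp.single i0 1, 0) with ha'
    have ha : g a = 1 := by
      simp [hg, ha', Finsupp.single_eq_same]
    obtain ⟨z, hz⟩ := hsurj (Additive.toMul a : A)
    refine ⟨(AddMonoidHom.toMultiplicativeRight g).comp (Abelianization.of), z, ?_⟩
    simp only [MonoidHom.comp_apply, hz, AddMonoidHom.coe_toMultiplicativeRight,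
      Function.comp_apply]
    exact congrArg ofAdd ha


open MulAction in
lemma GRV_key {G X : Type*} [Group G] [Finite G] [MulAction G X] (T : X → X)
    (hT : ∀ (g : G) (x : X), T (g • x) = g • T x)
    (hfin : Finite {p : X × G // p.2 • p.1 = T p.1}) :
    Nat.card G ∣ Nat.card {p : X × G // p.2 • p.1 = T p.1} := by
  classical
  set S := {p : X × G // p.2 • p.1 = T p.1} with hS
  letI s : Setoid S := (MulAction.orbitRel G X).comap (fun p => p.1.1)
  haveI : Finite S := hfin
  haveI : Fintype S := Fintype.ofFinite S
  haveI : Finite (Quotient s) := Quotient.finite s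
  haveI : Fintype (Quotient s) := Fintype.ofFinite _
  -- each fiber of the quotient map has cardinality `Nat.card G`
  have hfiber : ∀ ω : Quotient s,
      Nat.card {q : S // Quotient.mk s q = ω} = Nat.card G := by
    intro ω
    obtain ⟨p0, hp0⟩ := Quotient.exists_rep ω
    set f0 : X := p0.1.1 with hf0
    set t0 : G := p0.1.2 with ht0
    have h0 : t0 • f0 = T f0 := p0.2
    have hmem : ∀ q : S, Quotient.mk s q = ω → q.1.1 ∈ orbit G f0 := by
      intro q hq
      have : s.r q p0 := Quotient.exact (hq.trans hp0.symm)
      exact this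
    -- choice of witnesses for orbit membership
    have hch : ∀ f : orbit G f0, ∃ g : G, g • f0 = (f : X) := fun f =>
      MulAction.mem_orbit_iff.mp f.2
    choose u hu using hch
    refine (Nat.card_eq_of_bijective
      (fun q : {q : S // Quotient.mk s q = ω} =>
        (u ⟨q.1.1.1, hmem q.1 q.2⟩) * (t0⁻¹ *
          ((u ⟨q.1.1.1, hmem q.1 q.2⟩)⁻¹ * q.1.1.2 * (u ⟨q.1.1.1, hmem q.1 q.2⟩))))
      ⟨?_, ?_⟩)
    · -- injective
      rintro ⟨⟨⟨f, t⟩, hcond⟩, hq⟩ ⟨⟨⟨f', t'⟩, hcond'⟩, hq'⟩ h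
      simp only at h
      set v := u ⟨f, hmem _ hq⟩ with hv
      set v' := u ⟨f', hmem _ hq'⟩ with hv'
      have hvf : v • f0 = f := hu _
      have hvf' : v' • f0 = f' := hu _
      -- the image recovers f
      have key : ∀ (w tt : G) (ff : X), w • f0 = ff → (tt • ff = T ff) →
          (w * (t0⁻¹ * (w⁻¹ * tt * w))) • f0 = ff := by
        intro w tt ff hw hc
        have h1 : w⁻¹ • T ff = t0 • f0 := by
          rw [← hw, hT, inv_smul_smul, h0]
        calc (w * (t0⁻¹ * (w⁻¹ * tt * w))) • f0
            = w • t0⁻¹ • w⁻¹ • tt • w • f0 := by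
              simp only [mul_smul]
          _ = w • t0⁻¹ • w⁻¹ • T ff := by rw [hw, hc]
          _ = w • t0⁻¹ • t0 • f0 := by rw [h1]
          _ = ff := by rw [inv_smul_smul, hw]
      have e1 : (v * (t0⁻¹ * (v⁻¹ * t * v))) • f0 = f := key v t f hvf hcond
      have e2 : (v' * (t0⁻¹ * (v'⁻¹ * t' * v'))) • f0 = f' := key v' t' f' hvf' hcond'
      have hff : f = f' := by rw [← e1, ← e2, h]
      subst hff
      have hvv : v = v' := by rw [hv, hv']
      have htt : t = t' := by
        have := h
        rw [← hvv] at this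
        have h2 : v⁻¹ * t * v = v⁻¹ * t' * v := by
          have := mul_left_cancel (mul_left_cancel this)
          exact this
        have := mul_right_cancel h2
        exact mul_left_cancel this
      subst htt
      rfl
    · -- surjective
      intro g
      have hforb : g • f0 ∈ orbit G f0 := MulAction.mem_orbit _ _
      set f : X := g • f0 with hf
      set v := u ⟨f, hforb⟩ with hv
      have hvf : v • f0 = f := hu _
      set sg : G := v⁻¹ * g with hsg
      have hsg0 : sg • f0 = f0 := by
        rw [hsg, mul_smul, ← hf, ← hvf, inv_smul_smul]
      set t : G := v * t0 * sg * v⁻¹ with htdef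
      have hcond : t • f = T f := by
        have : v⁻¹ • f = f0 := by rw [← hvf, inv_smul_smul]
        calc t • f = v • t0 • sg • v⁻¹ • f := by
              simp only [htdef, mul_smul]
          _ = v • t0 • f0 := by rw [this, hsg0]
          _ = v • T f0 := by rw [h0]
          _ = T (v • f0) := (hT v f0).symm
          _ = T f := by rw [hvf]
      have hω : Quotient.mk s (⟨(f, t), hcond⟩ : S) = ω := by
        refine (Quotient.sound ?_).trans hp0
        show (f, t).1 ∈ orbit G f0
        exact hforb
      refine ⟨⟨⟨(f, t), hcond⟩, hω⟩, ?_⟩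
      have hfin2 : v * (t0⁻¹ * (v⁻¹ * t * v)) = g := by
        rw [htdef]
        group
        rw [hsg]
        group
      exact hfin2
  -- sum over the quotient
  have hdecomp : Nat.card S = Fintype.card (Quotient s) * Nat.card G := by
    haveI : ∀ ω : Quotient s, Fintype {q : S // Quotient.mk s q = ω} := fun ω =>
      Fintype.ofFinite _
    calc Nat.card S = Fintype.card S := Nat.card_eq_fintype_card
      _ = Fintype.card (Σ ω : Quotient s, {q : S // Quotient.mk s q = ω}) :=
          (Fintype.card_congr (Equiv.sigmaFiberEquiv (Quotient.mk s))).symm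
      _ = ∑ ω : Quotient s, Fintype.card {q : S // Quotient.mk s q = ω} :=
          Fintype.card_sigma
      _ = ∑ _ω : Quotient s, Nat.card G := by
          refine Finset.sum_congr rfl fun ω _ => ?_
          rw [← Nat.card_eq_fintype_card, hfiber]
      _ = Fintype.card (Quotient s) * Nat.card G := by
          rw [Finset.sum_const, Finset.card_univ, smul_eq_mul]
  rw [hdecomp]
  exact Dvd.intro_left _ rfl


open Multiplicative

/-- Conjugation by `z` as an endomorphism of `ker v`. -/
def GRVκ {F : Type*} [Group F] (v : F →* Multiplicative ℤ) (z : F) :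
    ↥v.ker →* ↥v.ker where
  toFun n := ⟨z * (n : F) * z⁻¹, by
    have hn : v (n : F) = 1 := n.2
    simp [MonoidHom.mem_ker, map_mul, map_inv, hn, mul_comm]⟩
  map_one' := by ext; simp
  map_mul' a b := by
    ext
    push_cast
    group

lemma GRV_finite (F G : Type*) [Group F] [Group.FG F] [Group G] [Finite G] :
    Finite (F →* G) := by
  obtain ⟨S, hS, hSfin⟩ := Group.fg_iff.mp ‹Group.FG F›
  haveI : Finite S := hSfin.to_subtype
  apply Finite.of_injective (fun h : F →* G => (fun s : S => h s))
  intro h h' he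
  exact MonoidHom.eq_of_eqOn_dense hS (fun x hx => congrFun he ⟨x, hx⟩)

lemma GRV_bij {F G : Type*} [Group F] [Group G] (v : F →* Multiplicative ℤ)
    (z : F) (hz : v z = ofAdd 1) :
    ∃ Φ : (F →* G) →
      {p : (↥v.ker →* G) × G // ∀ n : ↥v.ker, p.2 * p.1 n * p.2⁻¹ = p.1 (GRVκ v z n)},
      Function.Bijective Φ := by
  classical
  set e : F → ℤ := fun x => toAdd (v x) with he_def
  have he_mul : ∀ x y, e (x * y) = e x + e y := by intro x y; simp [he_def, map_mul]
  have he_inv : ∀ x, e x⁻¹ = - e x := by intro x; simp [he_def, map_inv]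
  have he_z : ∀ k : ℤ, e (z ^ k) = k := by
    intro k
    simp [he_def, map_zpow, hz]
  have hez1 : e z = 1 := by
    have := he_z 1
    rwa [zpow_one] at this
  have hmem : ∀ x, x ∈ v.ker ↔ e x = 0 := by
    intro x
    rw [MonoidHom.mem_ker, he_def]
    constructor
    · intro h; simp [h]
    · intro h
      have : ofAdd (toAdd (v x)) = ofAdd 0 := congrArg ofAdd h
      simpa using this
  have hxmem : ∀ x : F, z ^ (-(e x)) * x ∈ v.ker := by
    intro x
    rw [hmem, he_mul, he_z]
    omega
  have hκcoe : ∀ n : ↥v.ker, ((GRVκ v z n : ↥v.ker) : F) = z * (n : F) * z⁻¹ :=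
    fun n => rfl
  refine ⟨fun h => ⟨(h.comp v.ker.subtype, h z), ?_⟩, ?_, ?_⟩
  · intro n
    simp only [MonoidHom.comp_apply, Subgroup.coe_subtype]
    rw [hκcoe, map_mul, map_mul, map_inv]
  · -- injective
    intro h h' hph
    have hpair := congrArg Subtype.val hph
    have h1 : h.comp v.ker.subtype = h'.comp v.ker.subtype := congrArg Prod.fst hpair
    have h2 : h z = h' z := congrArg Prod.snd hpair
    ext x
    have hxsplit : ∀ (hh : F →* G), hh x = (hh z) ^ (e x) *
        (hh.comp v.ker.subtype) ⟨z ^ (-(e x)) * x, hxmem x⟩ := by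
      intro hh
      simp only [MonoidHom.comp_apply, Subgroup.coe_subtype]
      rw [← map_zpow, ← map_mul]
      congr 1
      group
    rw [hxsplit h, hxsplit h', h1, h2]
  · -- surjective
    rintro ⟨⟨f, t⟩, hc⟩
    simp only at hc
    -- the extension of `f` to a function on all of `F`
    set f' : F → G := fun x => if hx : x ∈ v.ker then f ⟨x, hx⟩ else 1 with hf'
    have hf'_of : ∀ (x : F) (hx : x ∈ v.ker), f' x = f ⟨x, hx⟩ := by
      intro x hx; exact dif_pos hx
    have hf'_not : ∀ x : F, x ∉ v.ker → f' x = 1 := fun x hx => dif_neg hx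
    have hf'_mul : ∀ a b : F, a ∈ v.ker → b ∈ v.ker → f' (a * b) = f' a * f' b := by
      intro a b ha hb
      rw [hf'_of a ha, hf'_of b hb, hf'_of (a * b) (mul_mem ha hb), ← map_mul]
      rfl
    have hconjmem : ∀ m : F, m ∈ v.ker ↔ z * m * z⁻¹ ∈ v.ker := by
      intro m
      rw [hmem, hmem, he_mul, he_mul, he_inv, hez1]
      omega
    have st : ∀ m : F, t * f' m * t⁻¹ = f' (z * m * z⁻¹) := by
      intro m
      by_cases hm : m ∈ v.ker
      · rw [hf'_of m hm, hf'_of _ ((hconjmem m).mp hm)]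
        have := hc ⟨m, hm⟩
        rw [this]
        rfl
      · rw [hf'_not _ hm, hf'_not _ (fun hh => hm ((hconjmem m).mpr hh))]
        simp
    have st' : ∀ m : F, t⁻¹ * f' m * t = f' (z⁻¹ * m * z) := by
      intro m
      have h1 := st (z⁻¹ * m * z)
      have h2 : z * (z⁻¹ * m * z) * z⁻¹ = m := by group
      rw [h2] at h1
      rw [← h1]
      group
    have L3 : ∀ (k : ℤ) (m : F), t ^ k * f' m * t ^ (-k) = f' (z ^ k * m * z ^ (-k)) := by
      intro k
      induction k using Int.induction_on with
      | zero => intro m; simp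
      | succ k ih =>
        intro m
        have h1 : t ^ ((k : ℤ) + 1) * f' m * t ^ (-((k : ℤ) + 1)) =
            t * (t ^ (k : ℤ) * f' m * t ^ (-(k : ℤ))) * t⁻¹ := by group
        rw [h1, ih, st]
        congr 1
        group
      | pred k ih =>
        intro m
        have h1 : t ^ (-(k : ℤ) - 1) * f' m * t ^ (-(-(k : ℤ) - 1)) =
            t⁻¹ * (t ^ (-(k : ℤ)) * f' m * t ^ (-(-(k : ℤ)))) * t := by group
        rw [h1, ih, st']
        congr 1
        group
    -- the extension homomorphism
    set hfun : F → G := fun x => t ^ (e x) * f' (z ^ (-(e x)) * x) with hfun_def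
    have hmul : ∀ x y : F, hfun (x * y) = hfun x * hfun y := by
      intro x y
      show t ^ (e (x * y)) * f' (z ^ (-(e (x * y))) * (x * y)) =
        t ^ (e x) * f' (z ^ (-(e x)) * x) * (t ^ (e y) * f' (z ^ (-(e y)) * y))
      rw [he_mul]
      set a := e x with ha
      set b := e y with hb
      have k1 : t ^ (-b) * f' (z ^ (-a) * x) * t ^ b =
          f' (z ^ (-b) * (z ^ (-a) * x) * z ^ b) := by
        have := L3 (-b) (z ^ (-a) * x)
        rwa [neg_neg] at this
      have m1 : z ^ (-b) * (z ^ (-a) * x) * z ^ b ∈ v.ker := by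
        rw [hmem, he_mul, he_mul, he_mul, he_z, he_z, he_z]
        omega
      have m2 : z ^ (-b) * y ∈ v.ker := by
        rw [hmem, he_mul, he_z]
        omega
      have k3 : (z ^ (-b) * (z ^ (-a) * x) * z ^ b) * (z ^ (-b) * y) =
          z ^ (-(a + b)) * (x * y) := by group
      calc t ^ (a + b) * f' (z ^ (-(a + b)) * (x * y))
          = t ^ (a + b) * f' ((z ^ (-b) * (z ^ (-a) * x) * z ^ b) * (z ^ (-b) * y)) := by
            rw [k3]
        _ = t ^ (a + b) * (f' (z ^ (-b) * (z ^ (-a) * x) * z ^ b) * f' (z ^ (-b) * y)) := by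
            rw [hf'_mul _ _ m1 m2]
        _ = t ^ (a + b) * ((t ^ (-b) * f' (z ^ (-a) * x) * t ^ b) * f' (z ^ (-b) * y)) := by
            rw [k1]
        _ = t ^ a * f' (z ^ (-a) * x) * (t ^ b * f' (z ^ (-b) * y)) := by
            group
    refine ⟨MonoidHom.mk' hfun hmul, ?_⟩
    refine Subtype.ext (Prod.ext ?_ ?_)
    · ext n
      show hfun (n : F) = f n
      have h0 : e (n : F) = 0 := (hmem _).mp n.2
      show t ^ (e (n : F)) * f' (z ^ (-(e (n : F))) * (n : F)) = f n
      rw [h0]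
      simp only [zpow_zero, neg_zero, one_mul, mul_one]
      rw [hf'_of _ n.2]
    · show t ^ (e z) * f' (z ^ (-(e z)) * z) = t
      rw [hez1]
      have h2 : z ^ (-(1:ℤ)) * z = 1 := by group
      rw [h2, hf'_of 1 (one_mem _)]
      have : (⟨(1 : F), one_mem _⟩ : ↥v.ker) = 1 := rfl
      rw [this, map_one, mul_one, zpow_one]


theorem stmt_13 (F : Type*) [Group F] [Group.FG F] [Infinite (Abelianization F)]
    (G : Type*) [Group G] [Fintype G] :
    Fintype.card G ∣ Nat.card (F →* G) := by
  classical
  obtain ⟨v, z, hz⟩ := GRV_exists_hom F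
  haveI : Finite (F →* G) := GRV_finite F G
  obtain ⟨Φ, hΦ⟩ := GRV_bij (G := G) v z hz
  set X := ↥v.ker →* G with hX
  letI : SMul G X := ⟨fun g f => (MulAut.conj g).toMonoidHom.comp f⟩
  letI : MulAction G X :=
    { one_smul := by
        intro f
        show (MulAut.conj (1 : G)).toMonoidHom.comp f = f
        ext n
        simp
      mul_smul := by
        intro g h f
        show (MulAut.conj (g * h)).toMonoidHom.comp f =
          (MulAut.conj g).toMonoidHom.comp ((MulAut.conj h).toMonoidHom.comp f)
        ext n
        simp [mul_assoc] }
  set T : X → X := fun f => f.comp (GRVκ v z) with hT_def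
  have hT : ∀ (g : G) (f : X), T (g • f) = g • T f := by
    intro g f
    rfl
  have hiff : ∀ p : X × G, (p.2 • p.1 = T p.1) ↔
      (∀ n : ↥v.ker, p.2 * p.1 n * p.2⁻¹ = p.1 (GRVκ v z n)) := by
    intro p
    constructor
    · intro h n
      have := DFunLike.congr_fun h n
      exact this
    · intro h
      ext n
      exact h n
  set E : {p : X × G // p.2 • p.1 = T p.1} ≃
      {p : X × G // ∀ n : ↥v.ker, p.2 * p.1 n * p.2⁻¹ = p.1 (GRVκ v z n)} :=
    Equiv.subtypeEquivRight hiff with hE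
  have hfin2 : Finite {p : X × G // ∀ n : ↥v.ker,
      p.2 * p.1 n * p.2⁻¹ = p.1 (GRVκ v z n)} :=
    Finite.of_surjective Φ hΦ.2
  have hfin1 : Finite {p : X × G // p.2 • p.1 = T p.1} := Finite.of_equiv _ E.symm
  have hcard : Nat.card (F →* G) = Nat.card {p : X × G // p.2 • p.1 = T p.1} := by
    rw [Nat.card_eq_of_bijective Φ hΦ, Nat.card_congr E.symm]
  rw [hcard, ← Nat.card_eq_fintype_card]
  exact GRV_key T hT hfin1
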